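/- For every m ≥ 0, the sum over i from 1 to 2^m of 2^(padicValNat 2 i) equals (m + 2) · 2^(m−1) when m ≥ 1, and equals 1 when m = 0. -/

import Mathlib

lemma key (n : ℕ) : ∑ i ∈ Finset.Icc 1 (2*n), 2 ^ padicValNat 2 i
    = n + 2 * ∑ i ∈ Finset.Icc 1 n, 2 ^ padicValNat 2 i := by
  induction n with
  | zero => simp
  | succ k ih =>
    rw [show 2*(k+1) = (2*k+1)+1 by ring,
      Finset.sum_Icc_succ_top (by omega), Finset.sum_Icc_succ_top (by omega), ih,
      Finset.sum_Icc_succ_top (Nat.le_add_left 1 k)]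
    have h1 : padicValNat 2 (2*k+1) = 0 :=
      padicValNat.eq_zero_of_not_dvd (by omega)
    have h2 : padicValNat 2 (2*k+1+1) = 1 + padicValNat 2 (k+1) := by
      rw [show 2*k+1+1 = 2*(k+1) by ring,
        padicValNat.mul (by norm_num) (by omega), padicValNat.self (by norm_num)]
    rw [h1, h2, pow_add]
    ring

theorem stmt5 (m : ℕ) :
    ∑ i ∈ Finset.Icc 1 (2 ^ m), 2 ^ padicValNat 2 i
      = if m = 0 then 1 else (m + 2) * 2 ^ (m - 1) := by
  induction m with
  | zero => simp
  | succ n ih =>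
    rw [pow_succ, mul_comm, key, ih]
    rcases Nat.eq_zero_or_pos n with h | h
    · subst h; norm_num
    · rw [if_neg (by omega), if_neg (by omega)]
      have : 2 ^ n = 2 * 2 ^ (n - 1) := by
        rw [← pow_succ']; congr 1; omega
      rw [Nat.succ_sub_one, this]
      ring
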